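/- Let X be a (75,32,10,16) strongly regular graph in which every 4-clique extends to a 5-clique and every vertex outside a 5-clique has exactly 2 neighbors in it. Let K5 be a 5-clique and X_{i,j} the partition sets of the outside vertices as before. Then every edge within a set X_{i,j} lies in a triangle contained in X_{i,j}, and any vertex of X_{i,j} not on such a triangle T is adjacent to no vertex of T. -/
import Mathlib


open Finset

/-- The number of neighbors of `x` inside the vertex set `K`. -/
def nbrs {V : Type*} [DecidableEq V] (G : SimpleGraph V) [DecidableRel G.Adj]
    (K : Finset V) (x : V) : ℕ :=
  (K.filter (fun y => G.Adj x y)).card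

/-- The number of vertices outside `K` with exactly `i` neighbors in `K`. -/
def bcount {V : Type*} [Fintype V] [DecidableEq V] (G : SimpleGraph V) [DecidableRel G.Adj]
    (K : Finset V) (i : ℕ) : ℕ :=
  ((univ \ K).filter (fun x => nbrs G K x = i)).card


/-- For a 5-clique `K` in a (75,32,10,16) SRG with the stated clique properties,
every edge inside a part `X_{a,b}` lies in a triangle contained in the part, and
a vertex of the part not on such a triangle has no neighbor on it. -/
theorem stmt17 {V : Type*} [Fintype V] [DecidableEq V]
    (G : SimpleGraph V) [DecidableRel G.Adj]
    (hG : G.IsSRGWith 75 32 10 16)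
    (h4 : ∀ s : Finset V, G.IsNClique 4 s → ∃ t, G.IsNClique 5 t ∧ s ⊆ t)
    (h5 : ∀ C : Finset V, G.IsNClique 5 C → ∀ x ∉ C, nbrs G C x = 2)
    (K : Finset V) (hK : G.IsNClique 5 K)
    (a b : V) (ha : a ∈ K) (hb : b ∈ K) (hab : a ≠ b)
    (S : Finset V)
    (hS : S = (univ \ K).filter (fun x => K.filter (fun y => G.Adj x y) = {a, b})) :
    (∀ x ∈ S, ∀ y ∈ S, G.Adj x y →
      ∃ T : Finset V, T ⊆ S ∧ G.IsNClique 3 T ∧ x ∈ T ∧ y ∈ T) ∧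
    (∀ T : Finset V, T ⊆ S → G.IsNClique 3 T →
      ∀ v ∈ S, v ∉ T → ∀ t ∈ T, ¬ G.Adj v t) := by
  have hmem : ∀ x ∈ S, x ∉ K ∧ G.Adj x a ∧ G.Adj x b ∧
      K.filter (fun y => G.Adj x y) = {a, b} := by
    intro x hx
    rw [hS, mem_filter, mem_sdiff] at hx
    obtain ⟨⟨-, hxK⟩, hf⟩ := hx
    have ha' : a ∈ K.filter (fun y => G.Adj x y) := by rw [hf]; simp
    have hb' : b ∈ K.filter (fun y => G.Adj x y) := by rw [hf]; simp
    simp only [mem_filter] at ha' hb'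
    exact ⟨hxK, ha'.2, hb'.2, hf⟩
  have hab' : G.Adj a b := hK.1 (by exact_mod_cast ha) (by exact_mod_cast hb) hab
  constructor
  · intro x hx y hy hxy
    obtain ⟨hxK, hxa, hxb, hfx⟩ := hmem x hx
    obtain ⟨hyK, hya, hyb, hfy⟩ := hmem y hy
    have hxa' : x ≠ a := fun h => hxK (h ▸ ha)
    have hxb' : x ≠ b := fun h => hxK (h ▸ hb)
    have hya' : y ≠ a := fun h => hyK (h ▸ ha)
    have hyb' : y ≠ b := fun h => hyK (h ▸ hb)
    have h4c : G.IsNClique 4 {x, y, a, b} := by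
      constructor
      · intro u hu w hw huw
        simp only [coe_insert, Set.mem_insert_iff, coe_singleton,
          Set.mem_singleton_iff] at hu hw
        rcases hu with rfl | rfl | rfl | rfl <;> rcases hw with rfl | rfl | rfl | rfl <;>
          first
          | exact absurd rfl huw
          | assumption
          | exact hxy.symm
          | exact hxa.symm
          | exact hxb.symm
          | exact hya.symm
          | exact hyb.symm
          | exact hab'.symm
      · rw [show ({x, y, a, b} : Finset V) = insert x (insert y {a, b}) from rfl,
          card_insert_of_notMem (by simp [hxy.ne, hxa', hxb']),
          card_insert_of_notMem (by simp [hya', hyb']),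
          card_insert_of_notMem (by simp [hab]), card_singleton]
    obtain ⟨t, ht5, hsub⟩ := h4 _ h4c
    have hne : ({x, y, a, b} : Finset V) ≠ t := fun h => by
      have h45 : (4 : ℕ) = 5 := by rw [← h4c.2, h, ht5.2]
      omega
    obtain ⟨z, hzt, hz⟩ := Finset.exists_of_ssubset (hsub.ssubset_of_ne hne)
    simp only [mem_insert, mem_singleton, not_or] at hz
    obtain ⟨hzx, hzy, hza, hzb⟩ := hz
    have hadj : ∀ w ∈ ({x, y, a, b} : Finset V), G.Adj z w := by
      intro w hw
      exact ht5.1 (by exact_mod_cast hzt) (by exact_mod_cast hsub hw)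
        (by rintro rfl; simp only [mem_insert, mem_singleton] at hw
            rcases hw with rfl | rfl | rfl | rfl <;> simp_all)
    have hzxadj : G.Adj z x := hadj x (by simp)
    have hzyadj : G.Adj z y := hadj y (by simp)
    have hzaadj : G.Adj z a := hadj a (by simp)
    have hzbadj : G.Adj z b := hadj b (by simp)
    have hzK : z ∉ K := by
      intro hzK
      have : z ∈ K.filter (fun y => G.Adj x y) := by
        rw [mem_filter]; exact ⟨hzK, hzxadj.symm⟩
      rw [hfx] at this
      simp only [mem_insert, mem_singleton] at this
      tauto
    have hn2 : nbrs G K z = 2 := h5 K hK z hzK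
    have hfz : K.filter (fun y => G.Adj z y) = {a, b} := by
      refine (Finset.eq_of_subset_of_card_le ?_ ?_).symm
      · intro w hw
        simp only [mem_insert, mem_singleton] at hw
        rcases hw with rfl | rfl
        · exact mem_filter.2 ⟨ha, hzaadj⟩
        · exact mem_filter.2 ⟨hb, hzbadj⟩
      · rw [card_insert_of_notMem (by simp [hab]), card_singleton]
        exact le_of_eq hn2
    have hzS : z ∈ S := by
      rw [hS, mem_filter, mem_sdiff]
      exact ⟨⟨mem_univ z, hzK⟩, hfz⟩
    refine ⟨{x, y, z}, ?_, ?_, by simp, by simp⟩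
    · intro w hw
      simp only [mem_insert, mem_singleton] at hw
      rcases hw with rfl | rfl | rfl <;> assumption
    · constructor
      · intro u hu w hw huw
        simp only [coe_insert, Set.mem_insert_iff, coe_singleton,
          Set.mem_singleton_iff] at hu hw
        rcases hu with rfl | rfl | rfl <;> rcases hw with rfl | rfl | rfl <;>
          first
          | exact absurd rfl huw
          | exact hxy
          | exact hxy.symm
          | exact hzxadj
          | exact hzxadj.symm
          | exact hzyadj
          | exact hzyadj.symm
      · rw [show ({x, y, z} : Finset V) = insert x (insert y {z}) from rfl,
          card_insert_of_notMem (by simp [hxy.ne, Ne.symm hzx]),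
          card_insert_of_notMem (by simp [Ne.symm hzy]), card_singleton]
  · intro T hTS hT3 v hv hvT t ht hvt
    obtain ⟨hvK, hva, hvb, -⟩ := hmem v hv
    obtain ⟨htK, hta, htb, -⟩ := hmem t (hTS ht)
    have haT : a ∉ T := fun h => (hmem a (hTS h)).1 ha
    have hbT : b ∉ T := fun h => (hmem b (hTS h)).1 hb
    have hC5 : G.IsNClique 5 (insert a (insert b T)) := by
      constructor
      · intro u hu w hw huw
        simp only [coe_insert, Set.mem_insert_iff, mem_coe] at hu hw
        rcases hu with rfl | rfl | hu <;> rcases hw with rfl | rfl | hw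
        · exact absurd rfl huw
        · exact hab'
        · exact ((hmem w (hTS hw)).2.1).symm
        · exact hab'.symm
        · exact absurd rfl huw
        · exact ((hmem w (hTS hw)).2.2.1).symm
        · exact (hmem u (hTS hu)).2.1
        · exact (hmem u (hTS hu)).2.2.1
        · exact hT3.1 (by exact_mod_cast hu) (by exact_mod_cast hw) huw
      · rw [card_insert_of_notMem (by simp [hab, haT]),
          card_insert_of_notMem hbT, hT3.2]
    have hvC : v ∉ insert a (insert b T) := by
      simp only [mem_insert, not_or]
      exact ⟨fun h => hvK (h ▸ ha), fun h => hvK (h ▸ hb), hvT⟩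
    have h2 := h5 _ hC5 v hvC
    have hsub3 : ({a, b, t} : Finset V) ⊆
        (insert a (insert b T)).filter (fun y => G.Adj v y) := by
      intro w hw
      simp only [mem_insert, mem_singleton] at hw
      rcases hw with rfl | rfl | rfl
      · exact mem_filter.2 ⟨by simp, hva⟩
      · exact mem_filter.2 ⟨by simp, hvb⟩
      · exact mem_filter.2 ⟨by simp [ht], hvt⟩
    have hta' : t ≠ a := fun h => htK (h ▸ ha)
    have htb' : t ≠ b := fun h => htK (h ▸ hb)
    have hc3 : ({a, b, t} : Finset V).card = 3 := by
      rw [card_insert_of_notMem (by simp [hab, Ne.symm hta']),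
        card_insert_of_notMem (by simp [Ne.symm htb']), card_singleton]
    have := Finset.card_le_card hsub3
    rw [hc3] at this
    unfold nbrs at h2
    omega
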